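/- Let p be a prime with p ≡ 1 (mod 5), set t = (p−1)/5, and let T be a generator of the group of characters on 𝔽_p. Then Σ_{e=0}^{p−2} G_{−e+t} · G_{−e+2t} · G_{−e+3t} · G_{−e+4t} · G_{−e} · G_{e} · G_{e+t} · G_{e+2t} · G_{e+3t} · G_{e+4t} · T^{−5e}(−1) = p^4 · (p−1) · (p−5). -/

import Mathlib

open Finset

/-- The standard additive character `θ(a) = e^{2πia/p}` on `𝔽_p`. -/
noncomputable def theta (p : ℕ) (a : ZMod p) : ℂ :=
  Complex.exp (2 * Real.pi * Complex.I * (ZMod.val a : ℂ) / (p : ℂ))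

/-- The Gauss sum `G(χ) = ∑_{x ∈ 𝔽_p} χ(x) θ(x)`. -/
noncomputable def gaussS (p : ℕ) [NeZero p] (χ : MulChar (ZMod p) ℂ) : ℂ :=
  ∑ x : ZMod p, χ x * theta p x

/-- The generalized Jacobi sum `J(χ₁,χ₂,χ₃) = ∑_{t₁+t₂+t₃=1} χ₁(t₁)χ₂(t₂)χ₃(t₃)`. -/
noncomputable def jacobi3 (p : ℕ) [NeZero p] (χ₁ χ₂ χ₃ : MulChar (ZMod p) ℂ) : ℂ :=
  ∑ v ∈ Finset.univ.filter (fun v : ZMod p × ZMod p × ZMod p => v.1 + v.2.1 + v.2.2 = 1),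
    χ₁ v.1 * χ₂ v.2.1 * χ₃ v.2.2


section Aux

variable (p : ℕ) [hp : Fact p.Prime]

noncomputable def psiP : AddChar (ZMod p) ℂ :=
  AddChar.zmodChar p (Complex.isPrimitiveRoot_exp p (NeZero.ne p)).pow_eq_one

lemma theta_eq (a : ZMod p) : theta p a = psiP p a := by
  rw [theta, psiP, AddChar.zmodChar_apply, ← Complex.exp_nat_mul]
  congr 1
  ring

lemma gaussS_eq (χ : MulChar (ZMod p) ℂ) : gaussS p χ = gaussSum χ (psiP p) := by
  unfold gaussS gaussSum
  exact Finset.sum_congr rfl fun x _ => by rw [theta_eq]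

lemma psiP_ne_one : psiP p ≠ 1 := by
  intro h
  have h2 : psiP p 1 = 1 := by rw [h]; rfl
  rw [psiP, AddChar.zmodChar_apply, ZMod.val_one_eq_one_mod] at h2
  have hlt : 1 < p := hp.out.one_lt
  rw [Nat.mod_eq_of_lt hlt, pow_one] at h2
  exact (Complex.isPrimitiveRoot_exp p (NeZero.ne p)).ne_one hlt h2

lemma psiP_prim : (psiP p).IsPrimitive := AddChar.IsPrimitive.of_ne_one (psiP_ne_one p)

lemma gaussS_one : gaussS p (1 : MulChar (ZMod p) ℂ) = -1 := by
  rw [gaussS_eq]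
  unfold gaussSum
  have h : ∀ x : ZMod p, (1 : MulChar (ZMod p) ℂ) x * psiP p x
      = psiP p x - (if x = 0 then 1 else 0) := by
    intro x
    by_cases hx : x = 0
    · subst hx
      rw [MulChar.map_nonunit _ (by simp : ¬ IsUnit (0 : ZMod p)), AddChar.map_zero_eq_one]
      simp
    · rw [MulChar.one_apply (isUnit_iff_ne_zero.mpr hx)]
      simp [hx]
  simp_rw [h]
  rw [Finset.sum_sub_distrib, AddChar.sum_eq_zero_of_ne_one (psiP_ne_one p)]
  simp

lemma orderT (T : MulChar (ZMod p) ℂ) (hT : ∀ χ : MulChar (ZMod p) ℂ, ∃ n : ℕ, χ = T ^ n) :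
    orderOf T = p - 1 := by
  haveI : Fintype (MulChar (ZMod p) ℂ) := Fintype.ofFinite _
  have hgen : ∀ χ : MulChar (ZMod p) ℂ, χ ∈ Subgroup.zpowers T := by
    intro χ
    obtain ⟨n, hn⟩ := hT χ
    exact Subgroup.mem_zpowers_iff.mpr ⟨n, by rw [zpow_natCast, hn]⟩
  rw [orderOf_eq_card_of_forall_mem_zpowers hgen,
    MulChar.card_eq_card_units_of_hasEnoughRootsOfUnity (ZMod p) ℂ,
    Nat.card_eq_fintype_card, ZMod.card_units]

end Aux

/-- Evaluation of `D₁` (proof of Theorem 5.1 of McCarthy). -/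
theorem gauss_D1_sum (p : ℕ) [Fact p.Prime] (hp : p % 5 = 1)
    (t : ℕ) (ht : t = (p - 1) / 5)
    (T : MulChar (ZMod p) ℂ) (hT : ∀ χ : MulChar (ZMod p) ℂ, ∃ n : ℕ, χ = T ^ n) :
    ∑ e ∈ Finset.range (p - 1),
      gaussS p (T ^ (-(e : ℤ) + t)) * gaussS p (T ^ (-(e : ℤ) + 2 * t)) *
        gaussS p (T ^ (-(e : ℤ) + 3 * t)) * gaussS p (T ^ (-(e : ℤ) + 4 * t)) *
        gaussS p (T ^ (-(e : ℤ))) * gaussS p (T ^ e) * gaussS p (T ^ (e + t)) *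
        gaussS p (T ^ (e + 2 * t)) * gaussS p (T ^ (e + 3 * t)) * gaussS p (T ^ (e + 4 * t)) *
        (T ^ (-5 * (e : ℤ))) (-1 : ZMod p) =
    (p : ℂ) ^ 4 * ((p : ℂ) - 1) * ((p : ℂ) - 5) := by
  have hprime : p.Prime := Fact.out
  have hp2 : 2 ≤ p := hprime.two_le
  have hp6 : p ≠ 6 := by intro h; rw [h] at hprime; norm_num at hprime
  have hp11 : 11 ≤ p := by
    rcases Nat.lt_or_ge p 11 with h | h
    · interval_cases p <;> simp_all <;> omega
    · exact h
  have h5t : 5 * t = p - 1 := by omega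
  have ht1 : 1 ≤ t := by omega
  -- divisibility criterion for T powers
  have hord : orderOf T = p - 1 := orderT p T hT
  have hdvd : ∀ k : ℤ, T ^ k = 1 ↔ (5 * (t : ℤ)) ∣ k := by
    intro k
    rw [← orderOf_dvd_iff_zpow_eq_one, hord]
    constructor <;> intro h <;> [skip; skip] <;>
      · have : ((p - 1 : ℕ) : ℤ) = 5 * (t : ℤ) := by omega
        first
        | (rw [this] at h; exact h)
        | (rw [this]; exact h)
  have hshift : ∀ a b : ℤ, (5 * (t : ℤ)) ∣ (a - b) → T ^ a = T ^ b := by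
    intro a b h
    have h1 : T ^ (a - b) = 1 := (hdvd _).mpr h
    calc T ^ a = T ^ (a - b) * T ^ b := by rw [← zpow_add, sub_add_cancel]
    _ = T ^ b := by rw [h1, one_mul]
  -- pair lemma
  have pair : ∀ a : ℤ, gaussS p (T ^ a) * gaussS p (T ^ (-a)) =
      (if (5 * (t : ℤ)) ∣ a then 1 else (p : ℂ)) * (T ^ a) (-1 : ZMod p) := by
    intro a
    by_cases hda : (5 * (t : ℤ)) ∣ a
    · rw [if_pos hda]
      have h1 : T ^ a = 1 := (hdvd a).mpr hda
      have h2 : T ^ (-a) = 1 := (hdvd (-a)).mpr (Dvd.dvd.neg_right hda)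
      rw [h1, h2, gaussS_one, MulChar.one_apply (IsUnit.neg isUnit_one)]
      norm_num
    · rw [if_neg hda]
      have hne : T ^ a ≠ 1 := fun h => hda ((hdvd a).mp h)
      have h1 : gaussSum (T ^ a) (psiP p) * gaussSum (T ^ a)⁻¹ (psiP p)⁻¹
          = (Fintype.card (ZMod p) : ℂ) := gaussSum_mul_gaussSum_eq_card hne (psiP_prim p)
      have h2 : ((T ^ a)⁻¹ : MulChar (ZMod p) ℂ) (-1) * gaussSum (T ^ a)⁻¹ (psiP p)⁻¹
          = gaussSum (T ^ a)⁻¹ (psiP p) := mul_gaussSum_inv_eq_gaussSum _ _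
      have h3 : ((T ^ a)⁻¹ : MulChar (ZMod p) ℂ) (-1) = (T ^ a) (-1 : ZMod p) := by
        rw [MulChar.inv_apply', inv_neg_one]
      rw [ZMod.card] at h1
      rw [gaussS_eq, gaussS_eq, zpow_neg, ← h2, h3, mul_left_comm, h1, mul_comm]
  -- character value combination lemmas
  have comb : ∀ a b : ℤ, (T ^ a) (-1 : ZMod p) * (T ^ b) (-1 : ZMod p)
      = (T ^ (a + b)) (-1 : ZMod p) := by
    intro a b
    rw [zpow_add, MulChar.mul_apply]
  have sq1 : ∀ a b : ℤ, a + a = b → (T ^ b) (-1 : ZMod p) = 1 := by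
    intro a b h
    subst h
    rw [zpow_add, MulChar.mul_apply, ← map_mul, neg_mul_neg, one_mul, map_one]
  -- regrouping lemmas for complex numbers
  have regroup : ∀ g1 g2 g3 g4 g5 h1 h2 h3 h4 h5 c : ℂ,
      g1 * g2 * g3 * g4 * g5 * h5 * h4 * h3 * h2 * h1 * c =
      g1 * h1 * (g2 * h2) * (g3 * h3) * (g4 * h4) * (g5 * h5) * c := by
    intros; ring
  have regroup2 : ∀ c1 x1 c2 x2 c3 x3 c4 x4 c5 x5 y : ℂ,
      c1 * x1 * (c2 * x2) * (c3 * x3) * (c4 * x4) * (c5 * x5) * y =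
      c1 * c2 * c3 * c4 * c5 * (x1 * x2 * x3 * x4 * x5 * y) := by
    intros; ring
  have perE : ∀ e ∈ Finset.range (p - 1),
      gaussS p (T ^ (-(e : ℤ) + t)) * gaussS p (T ^ (-(e : ℤ) + 2 * t)) *
        gaussS p (T ^ (-(e : ℤ) + 3 * t)) * gaussS p (T ^ (-(e : ℤ) + 4 * t)) *
        gaussS p (T ^ (-(e : ℤ))) * gaussS p (T ^ e) * gaussS p (T ^ (e + t)) *
        gaussS p (T ^ (e + 2 * t)) * gaussS p (T ^ (e + 3 * t)) * gaussS p (T ^ (e + 4 * t)) *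
        (T ^ (-5 * (e : ℤ))) (-1 : ZMod p) =
      (if t ∣ e then (p : ℂ) ^ 4 else (p : ℂ) ^ 5) := by
    intro e he
    rw [Finset.mem_range] at he
    have helt : e < 5 * t := by omega
    have e0 : (T ^ e : MulChar (ZMod p) ℂ) = T ^ (-(-(e : ℤ))) := by
      rw [neg_neg, zpow_natCast]
    have e1 : (T ^ (e + t) : MulChar (ZMod p) ℂ) = T ^ (-(-(e : ℤ) + 4 * (t : ℤ))) := by
      rw [← zpow_natCast]; apply hshift; exact ⟨1, by push_cast; ring⟩
    have e2 : (T ^ (e + 2 * t) : MulChar (ZMod p) ℂ) = T ^ (-(-(e : ℤ) + 3 * (t : ℤ))) := by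
      rw [← zpow_natCast]; apply hshift; exact ⟨1, by push_cast; ring⟩
    have e3 : (T ^ (e + 3 * t) : MulChar (ZMod p) ℂ) = T ^ (-(-(e : ℤ) + 2 * (t : ℤ))) := by
      rw [← zpow_natCast]; apply hshift; exact ⟨1, by push_cast; ring⟩
    have e4 : (T ^ (e + 4 * t) : MulChar (ZMod p) ℂ) = T ^ (-(-(e : ℤ) + (t : ℤ))) := by
      rw [← zpow_natCast]; apply hshift; exact ⟨1, by push_cast; ring⟩
    rw [e0, e1, e2, e3, e4, regroup, pair, pair, pair, pair, pair, regroup2]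
    have hχ : (T ^ (-(e : ℤ) + (t:ℤ))) (-1 : ZMod p) * (T ^ (-(e : ℤ) + 2 * (t:ℤ))) (-1 : ZMod p) *
        (T ^ (-(e : ℤ) + 3 * (t:ℤ))) (-1 : ZMod p) * (T ^ (-(e : ℤ) + 4 * (t:ℤ))) (-1 : ZMod p) *
        (T ^ (-(e : ℤ))) (-1 : ZMod p) * (T ^ (-5 * (e : ℤ))) (-1 : ZMod p) = 1 := by
      rw [comb, comb, comb, comb, comb]
      exact sq1 (-5 * (e : ℤ) + 5 * (t : ℤ)) _ (by ring)
    rw [hχ, mul_one]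
    -- convert conditions
    have hc1 : (5 * (t : ℤ)) ∣ (-(e : ℤ) + (t:ℤ)) ↔ (e : ℤ) = (t : ℤ) := by
      constructor
      · intro hd
        have h0 := Int.eq_zero_of_abs_lt_dvd hd (by rw [abs_lt]; constructor <;> omega)
        omega
      · intro h; rw [show -(e : ℤ) + (t:ℤ) = 0 by omega]; exact dvd_zero _
    have hc2 : (5 * (t : ℤ)) ∣ (-(e : ℤ) + 2 * (t:ℤ)) ↔ (e : ℤ) = 2 * (t : ℤ) := by
      constructor
      · intro hd
        have h0 := Int.eq_zero_of_abs_lt_dvd hd (by rw [abs_lt]; constructor <;> omega)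
        omega
      · intro h; rw [show -(e : ℤ) + 2 * (t:ℤ) = 0 by omega]; exact dvd_zero _
    have hc3 : (5 * (t : ℤ)) ∣ (-(e : ℤ) + 3 * (t:ℤ)) ↔ (e : ℤ) = 3 * (t : ℤ) := by
      constructor
      · intro hd
        have h0 := Int.eq_zero_of_abs_lt_dvd hd (by rw [abs_lt]; constructor <;> omega)
        omega
      · intro h; rw [show -(e : ℤ) + 3 * (t:ℤ) = 0 by omega]; exact dvd_zero _
    have hc4 : (5 * (t : ℤ)) ∣ (-(e : ℤ) + 4 * (t:ℤ)) ↔ (e : ℤ) = 4 * (t : ℤ) := by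
      constructor
      · intro hd
        have h0 := Int.eq_zero_of_abs_lt_dvd hd (by rw [abs_lt]; constructor <;> omega)
        omega
      · intro h; rw [show -(e : ℤ) + 4 * (t:ℤ) = 0 by omega]; exact dvd_zero _
    have hc0 : (5 * (t : ℤ)) ∣ (-(e : ℤ)) ↔ (e : ℤ) = 0 := by
      constructor
      · intro hd
        have h0 := Int.eq_zero_of_abs_lt_dvd hd (by rw [abs_lt]; constructor <;> omega)
        omega
      · intro h; rw [show -(e : ℤ) = 0 by omega]; exact dvd_zero _
    rw [if_congr hc1 rfl rfl, if_congr hc2 rfl rfl, if_congr hc3 rfl rfl,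
      if_congr hc4 rfl rfl, if_congr hc0 rfl rfl]
    by_cases hte : t ∣ e
    · rw [if_pos hte]
      obtain ⟨k0, hk0⟩ := hte
      have hk05 : k0 < 5 := by
        rw [hk0, mul_comm 5 t] at helt
        exact Nat.lt_of_mul_lt_mul_left helt
      subst hk0
      interval_cases k0
      · rw [if_neg (show ¬((↑(t*0):ℤ) = (t:ℤ)) by omega),
          if_neg (show ¬((↑(t*0):ℤ) = 2*(t:ℤ)) by omega),
          if_neg (show ¬((↑(t*0):ℤ) = 3*(t:ℤ)) by omega),
          if_neg (show ¬((↑(t*0):ℤ) = 4*(t:ℤ)) by omega),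
          if_pos (show ((↑(t*0):ℤ) = 0) by omega)]
        ring
      · rw [if_pos (show ((↑(t*1):ℤ) = (t:ℤ)) by omega),
          if_neg (show ¬((↑(t*1):ℤ) = 2*(t:ℤ)) by omega),
          if_neg (show ¬((↑(t*1):ℤ) = 3*(t:ℤ)) by omega),
          if_neg (show ¬((↑(t*1):ℤ) = 4*(t:ℤ)) by omega),
          if_neg (show ¬((↑(t*1):ℤ) = 0) by omega)]
        ring
      · rw [if_neg (show ¬((↑(t*2):ℤ) = (t:ℤ)) by omega),
          if_pos (show ((↑(t*2):ℤ) = 2*(t:ℤ)) by omega),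
          if_neg (show ¬((↑(t*2):ℤ) = 3*(t:ℤ)) by omega),
          if_neg (show ¬((↑(t*2):ℤ) = 4*(t:ℤ)) by omega),
          if_neg (show ¬((↑(t*2):ℤ) = 0) by omega)]
        ring
      · rw [if_neg (show ¬((↑(t*3):ℤ) = (t:ℤ)) by omega),
          if_neg (show ¬((↑(t*3):ℤ) = 2*(t:ℤ)) by omega),
          if_pos (show ((↑(t*3):ℤ) = 3*(t:ℤ)) by omega),
          if_neg (show ¬((↑(t*3):ℤ) = 4*(t:ℤ)) by omega),
          if_neg (show ¬((↑(t*3):ℤ) = 0) by omega)]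
        ring
      · rw [if_neg (show ¬((↑(t*4):ℤ) = (t:ℤ)) by omega),
          if_neg (show ¬((↑(t*4):ℤ) = 2*(t:ℤ)) by omega),
          if_neg (show ¬((↑(t*4):ℤ) = 3*(t:ℤ)) by omega),
          if_pos (show ((↑(t*4):ℤ) = 4*(t:ℤ)) by omega),
          if_neg (show ¬((↑(t*4):ℤ) = 0) by omega)]
        ring
    · rw [if_neg hte,
        if_neg (show ¬((e:ℤ) = (t:ℤ)) from fun h => hte ⟨1, by omega⟩),
        if_neg (show ¬((e:ℤ) = 2*(t:ℤ)) from fun h => hte ⟨2, by omega⟩),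
        if_neg (show ¬((e:ℤ) = 3*(t:ℤ)) from fun h => hte ⟨3, by omega⟩),
        if_neg (show ¬((e:ℤ) = 4*(t:ℤ)) from fun h => hte ⟨4, by omega⟩),
        if_neg (show ¬((e:ℤ) = 0) from fun h => hte ⟨0, by omega⟩)]
      ring
  rw [Finset.sum_congr rfl perE, ← h5t]
  have hfil : (Finset.range (5 * t)).filter (fun e => t ∣ e)
      = (Finset.range 5).image (t * ·) := by
    ext a
    simp only [Finset.mem_filter, Finset.mem_range, Finset.mem_image]
    constructor
    · rintro ⟨ha, k, rfl⟩
      refine ⟨k, ?_, rfl⟩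
      rw [mul_comm 5 t] at ha
      exact Nat.lt_of_mul_lt_mul_left ha
    · rintro ⟨k, hk5, rfl⟩
      refine ⟨?_, ⟨k, rfl⟩⟩
      calc t * k < t * 5 := mul_lt_mul_of_pos_left hk5 (by omega : 0 < t)
      _ = 5 * t := by ring
  rw [Finset.sum_ite]
  have hcard1 : ((Finset.range (5 * t)).filter (fun e => t ∣ e)).card = 5 := by
    rw [hfil, Finset.card_image_of_injective _ (mul_right_injective₀ (by omega : t ≠ 0))]
    simp
  have hcard2 : ((Finset.range (5 * t)).filter (fun e => ¬ t ∣ e)).card = 5 * t - 5 := by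
    have h := Finset.card_filter_add_card_filter_not
      (s := Finset.range (5 * t)) (p := fun e => t ∣ e)
    rw [Finset.card_range] at h
    omega
  rw [Finset.sum_const, Finset.sum_const, hcard1, hcard2, nsmul_eq_mul, nsmul_eq_mul]
  have h6 : 5 * t - 5 = p - 6 := by omega
  rw [h6]
  have hcast : ((p - 6 : ℕ) : ℂ) = (p : ℂ) - 6 := by
    push_cast [Nat.cast_sub (by omega : 6 ≤ p)]
    ring
  rw [hcast]
  push_cast
  ring
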